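/- arXiv:2012.15292 — 6 statements merged into one kernel-verified Lean document; each statement's English description precedes it below -/
import Mathlib

section
/- Let C be a field of characteristic zero and let f, g ∈ C[[t]] be formal power series. Then Φ_τ(f) = g if and only if 𝔅(g) = 𝔅(f)·exp(t), where exp(t) = Σ_{n≥0} tⁿ/n!. -/
noncomputable section

/-- Substitution of a power series `u` (assumed to have zero constant term)
into a power series `p`, i.e. `p(u)`, defined coefficientwise. -/
def PowerSeries.substPS {R : Type*} [CommRing R] (u p : PowerSeries R) : PowerSeries R :=
  PowerSeries.mk fun k =>
    ∑ n ∈ Finset.range (k + 1), PowerSeries.coeff n p * PowerSeries.coeff k (u ^ n)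

/-- The Borel transform `𝔅 : C[[t]] → C[[t]]`, `Σ gₙ tⁿ ↦ Σ (gₙ/n!) tⁿ`. -/
def PowerSeries.borel {C : Type*} [Field C] (f : PowerSeries C) : PowerSeries C :=
  PowerSeries.mk fun n => (n.factorial : C)⁻¹ * PowerSeries.coeff n f

/-- The map `Φ_τ : f(t) ↦ (1/(1-t))·f(t/(1-t))`. -/
def PowerSeries.phiTau {C : Type*} [Field C] (f : PowerSeries C) : PowerSeries C :=
  (1 - PowerSeries.X)⁻¹ *
    PowerSeries.substPS (PowerSeries.X * (1 - PowerSeries.X)⁻¹) f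

namespace PowerSeries

variable {C : Type*} [Field C]

lemma one_sub_X_inv_eq_mk_one : ((1 - X : PowerSeries C))⁻¹ = mk 1 := by
  rw [PowerSeries.inv_eq_iff_mul_eq_one (by simp)]
  exact mk_one_mul_one_sub_eq_one C

lemma key_coeff (n k : ℕ) :
    coeff k ((1 - X)⁻¹ * (X * (1 - X)⁻¹) ^ n) = (k.choose n : C) := by
  have h1 : ((1 - X : PowerSeries C))⁻¹ * (X * (1 - X)⁻¹) ^ n
      = X ^ n * ((invOneSubPow C (n + 1)).val) := by
    rw [invOneSubPow_val_succ_eq_mk_add_choose, mul_pow, one_sub_X_inv_eq_mk_one]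
    rw [show (mk fun m => ((n + m).choose n : C)) = (mk 1 : PowerSeries C) ^ (n + 1) from
      (mk_one_pow_eq_mk_choose_add C n).symm]
    ring
  rw [h1, invOneSubPow_val_succ_eq_mk_add_choose, coeff_X_pow_mul']
  split_ifs with h
  · rw [coeff_mk, Nat.add_sub_cancel' h]
  · rw [Nat.choose_eq_zero_of_lt (by omega), Nat.cast_zero]

lemma coeff_u_pow_eq_zero {n k : ℕ} (h : k < n) :
    coeff (R := C) k ((X * (1 - X)⁻¹) ^ n) = 0 := by
  rw [mul_pow, coeff_X_pow_mul', if_neg (by omega)]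

lemma coeff_phiTau (f : PowerSeries C) (k : ℕ) :
    coeff k (phiTau f) = ∑ n ∈ Finset.range (k + 1), (k.choose n : C) * coeff n f := by
  set u : PowerSeries C := X * (1 - X)⁻¹ with hu
  rw [phiTau, coeff_mul]
  have hsub : ∀ p ∈ Finset.HasAntidiagonal.antidiagonal k,
      coeff p.1 ((1 - X : PowerSeries C))⁻¹ * coeff p.2 (substPS u f)
        = ∑ n ∈ Finset.range (k + 1),
            coeff n f * (coeff p.1 ((1 - X : PowerSeries C))⁻¹ * coeff p.2 (u ^ n)) := by
    intro p hp
    rw [Finset.HasAntidiagonal.mem_antidiagonal] at hp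
    rw [substPS, coeff_mk, Finset.mul_sum]
    rw [Finset.sum_subset (Finset.range_subset_range.2 (show p.2 + 1 ≤ k + 1 by omega))]
    · apply Finset.sum_congr rfl; intro n _; ring
    · intro n hn hn'
      rw [Finset.mem_range, not_lt] at hn'
      rw [coeff_u_pow_eq_zero (by omega), mul_zero, mul_zero]
  rw [Finset.sum_congr rfl hsub, Finset.sum_comm]
  apply Finset.sum_congr rfl
  intro n _
  rw [← Finset.mul_sum, ← coeff_mul, key_coeff, mul_comm]

lemma coeff_borel (f : PowerSeries C) (k : ℕ) :
    coeff k (borel f) = (k.factorial : C)⁻¹ * coeff k f := by rw [borel, coeff_mk]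

lemma borel_injective [CharZero C] : Function.Injective (borel (C := C)) := by
  intro a b h
  ext k
  have := congrArg (coeff k) h
  rw [coeff_borel, coeff_borel] at this
  exact mul_left_cancel₀ (Nat.cast_ne_zero.2 (Nat.factorial_ne_zero k) |> inv_ne_zero) this

lemma borel_phiTau [CharZero C] (f : PowerSeries C) :
    borel (phiTau f) = borel f * exp C := by
  ext k
  rw [coeff_borel, coeff_phiTau, coeff_mul, Finset.mul_sum]
  rw [Finset.Nat.sum_antidiagonal_eq_sum_range_succ_mk]
  apply Finset.sum_congr rfl
  intro n hn
  rw [Finset.mem_range] at hn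
  rw [coeff_borel, coeff_exp]
  have : (algebraMap ℚ C) (1 / (k - n).factorial) = ((k - n).factorial : C)⁻¹ := by
    push_cast [map_div₀, map_one, map_natCast]
    simp
  rw [this, Nat.cast_choose C (by omega)]
  have hn' : (n.factorial : C) ≠ 0 := Nat.cast_ne_zero.2 (Nat.factorial_ne_zero n)
  have hk : ((k - n).factorial : C) ≠ 0 := Nat.cast_ne_zero.2 (Nat.factorial_ne_zero _)
  have hkf : (k.factorial : C) ≠ 0 := Nat.cast_ne_zero.2 (Nat.factorial_ne_zero k)
  field_simp

end PowerSeries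

/-- `Φ_τ(f) = g` if and only if `𝔅(g) = 𝔅(f)·exp(t)`. -/
theorem phiTau_eq_iff_borel_mul_exp {C : Type*} [Field C] [CharZero C]
    (f g : PowerSeries C) :
    PowerSeries.phiTau f = g ↔ PowerSeries.borel g = PowerSeries.borel f * PowerSeries.exp C := by
  constructor
  · rintro rfl; exact PowerSeries.borel_phiTau f
  · intro h
    exact PowerSeries.borel_injective ((PowerSeries.borel_phiTau f).trans h.symm)

end
end

section
/- Let B_n denote the n-th Bell number (the number of partitions of a set with n elements, with B_0 = 1) and let B(t) := Σ_{n≥0} B_n tⁿ ∈ ℚ[[t]] be the ordinary generating function of the Bell numbers. Then B satisfies the first-order difference equation B(t/(1+t)) = t·B(t) + 1 in ℚ[[t]]. -/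
noncomputable section

/-- The `n`-th Bell number: the number of partitions of a set with `n` elements. -/
def bellNumber (n : ℕ) : ℕ :=
  Nat.card (Finpartition (Finset.univ : Finset (Fin n)))

set_option linter.unusedSectionVars false

namespace BellAux

open Finset

variable {α : Type*} [Fintype α] [DecidableEq α]

/-- The setoid associated to a finpartition of `univ`. -/
def finpartitionSetoid (P : Finpartition (univ : Finset α)) : Setoid α where
  r a b := b ∈ P.part a
  iseqv := by
    constructor
    · intro a; exact P.mem_part (mem_univ a)
    · intro a b h
      rw [P.mem_part_iff_part_eq_part (mem_univ b) (mem_univ a)] at h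
      rw [P.mem_part_iff_part_eq_part (mem_univ a) (mem_univ b), h]
    · intro a b c hab hbc
      rw [P.mem_part_iff_part_eq_part (mem_univ b) (mem_univ a)] at hab
      rw [P.mem_part_iff_part_eq_part (mem_univ c) (mem_univ b)] at hbc
      rw [P.mem_part_iff_part_eq_part (mem_univ c) (mem_univ a), ← hab, hbc]

open scoped Classical in
/-- Finpartitions of `univ` are equivalent to setoids. -/
noncomputable def finpartitionEquivSetoid : Finpartition (univ : Finset α) ≃ Setoid α where
  toFun := finpartitionSetoid
  invFun s := Finpartition.ofSetoid s
  left_inv P := by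
    apply Finpartition.ext
    ext t
    simp only [Finpartition.ofSetoid, Finpartition.ofSetSetoid_parts, Finset.mem_image, mem_univ, true_and]
    constructor
    · rintro ⟨a, rfl⟩
      have : ({b | (finpartitionSetoid P).r a b} : Finset α) = P.part a := by
        ext b; simp [finpartitionSetoid]; exact Iff.rfl
      rw [this]
      exact P.part_mem.2 (mem_univ a)
    · intro ht
      obtain ⟨a, ha⟩ := P.nonempty_of_mem_parts ht
      refine ⟨a, ?_⟩
      have : ({b | (finpartitionSetoid P).r a b} : Finset α) = P.part a := by
        ext b; simp [finpartitionSetoid]; exact Iff.rfl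
      rw [this, P.part_eq_of_mem ht ha]
  right_inv s := by
    ext a b
    show b ∈ (Finpartition.ofSetoid s).part a ↔ _
    rw [Finpartition.mem_part_ofSetoid_iff_rel]

theorem bell_card (n : ℕ) :
    Nat.card (Finpartition (univ : Finset (Fin n))) = Nat.card (Setoid (Fin n)) :=
  Nat.card_congr finpartitionEquivSetoid

-- Setoid congruence
def setoidCongr {α β : Type*} (e : α ≃ β) : Setoid α ≃ Setoid β where
  toFun s := ⟨fun x y => s.r (e.symm x) (e.symm y),
    ⟨fun _ => s.refl _, fun h => s.symm h, fun h h' => s.trans h h'⟩⟩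
  invFun s := ⟨fun x y => s.r (e x) (e y),
    ⟨fun _ => s.refl _, fun h => s.symm h, fun h h' => s.trans h h'⟩⟩
  left_inv s := by ext x y; simp [Setoid.r]
  right_inv s := by ext x y; simp [Setoid.r]

instance {α : Type*} [Finite α] : Finite (Setoid α) :=
  Finite.of_injective (fun s : Setoid α => s.r) fun _ _ h => Setoid.ext fun a b => by simp only at h; rw [h]

theorem nat_card_sigma {ι : Type*} [Fintype ι] (f : ι → Type*) [∀ i, Finite (f i)] :
    Nat.card (Σ i, f i) = ∑ i, Nat.card (f i) := by
  have := fun i => Fintype.ofFinite (f i)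
  simp [Nat.card_eq_fintype_card, Fintype.card_sigma]

open Finset

variable {α : Type*} [Fintype α] [DecidableEq α]

open scoped Classical

/-- The set of elements equivalent to `none`. -/
noncomputable def noneBlock (s : Setoid (Option α)) : Finset α :=
  {a : α | s.r (some a) none}

/-- classification map -/
noncomputable def clsMap (t : Finset α) (s' : Setoid {x : α // x ∉ t}) :
    Option α → Option (Quotient s')
  | none => none
  | some a => if h : a ∈ t then none else some (Quotient.mk s' ⟨a, h⟩)

noncomputable def Fmap (s : Setoid (Option α)) : Σ t : Finset α, Setoid {x : α // x ∉ t} :=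
  ⟨noneBlock s, Setoid.comap (fun x => some x.1) s⟩

noncomputable def Gmap (p : Σ t : Finset α, Setoid {x : α // x ∉ t}) : Setoid (Option α) :=
  Setoid.ker (clsMap p.1 p.2)

lemma setoid_heq {t t' : Finset α} (h : t = t') (σ : Setoid {x : α // x ∉ t})
    (σ' : Setoid {x : α // x ∉ t'})
    (H : ∀ a b (ha : a ∉ t) (hb : b ∉ t) (ha' : a ∉ t') (hb' : b ∉ t'),
      σ.r ⟨a, ha⟩ ⟨b, hb⟩ ↔ σ'.r ⟨a, ha'⟩ ⟨b, hb'⟩) : HEq σ σ' := by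
  subst h
  exact heq_of_eq (Setoid.ext fun x y => H x.1 y.1 x.2 y.2 x.2 y.2)

lemma mem_noneBlock {s : Setoid (Option α)} {a : α} :
    a ∈ noneBlock s ↔ s.r (some a) none := by simp [noneBlock]

noncomputable def setoidOptionEquiv :
    Setoid (Option α) ≃ Σ t : Finset α, Setoid {x : α // x ∉ t} where
  toFun := Fmap
  invFun := Gmap
  left_inv s := by
    apply Setoid.ext
    intro x y
    show clsMap _ _ x = clsMap _ _ y ↔ s.r x y
    have hmem : ∀ a : α, a ∈ (Fmap s).1 ↔ s.r (some a) none := fun a => mem_noneBlock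
    match x, y with
    | none, none => simpa [clsMap] using s.refl none
    | none, some b =>
      simp only [clsMap]
      by_cases hb : b ∈ (Fmap s).1
      · rw [dif_pos hb]
        simpa using s.symm ((hmem b).1 hb)
      · rw [dif_neg hb]
        simp only [reduceCtorEq, false_iff]
        exact fun h => hb ((hmem b).2 (s.symm h))
    | some a, none =>
      simp only [clsMap]
      by_cases ha : a ∈ (Fmap s).1
      · rw [dif_pos ha]
        simpa using (hmem a).1 ha
      · rw [dif_neg ha]
        simp only [reduceCtorEq, false_iff]
        exact fun h => ha ((hmem a).2 h)
    | some a, some b =>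
      simp only [clsMap]
      by_cases ha : a ∈ (Fmap s).1 <;> by_cases hb : b ∈ (Fmap s).1
      · rw [dif_pos ha, dif_pos hb]
        simpa using s.trans ((hmem a).1 ha) (s.symm ((hmem b).1 hb))
      · rw [dif_pos ha, dif_neg hb]
        simp only [reduceCtorEq, false_iff]
        exact fun h => hb ((hmem b).2 (s.trans (s.symm h) ((hmem a).1 ha)))
      · rw [dif_neg ha, dif_pos hb]
        simp only [reduceCtorEq, false_iff]
        exact fun h => ha ((hmem a).2 (s.trans h ((hmem b).1 hb)))
      · rw [dif_neg ha, dif_neg hb]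
        rw [Option.some_inj, Quotient.eq]
        exact Iff.rfl
  right_inv p := by
    obtain ⟨t, s'⟩ := p
    have ht : noneBlock (Gmap ⟨t, s'⟩) = t := by
      ext a
      rw [mem_noneBlock]
      show clsMap _ _ (some a) = clsMap _ _ none ↔ _
      simp only [clsMap]
      by_cases ha : a ∈ t <;> simp [ha]
    refine Sigma.ext ht (setoid_heq ht _ _ ?_)
    intro a b ha hb ha' hb'
    show clsMap t s' (some a) = clsMap t s' (some b) ↔ _
    simp only [clsMap, dif_neg ha', dif_neg hb', Option.some_inj, Quotient.eq]

/-- shorthand -/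
noncomputable def sb (n : ℕ) : ℕ := Nat.card (Setoid (Fin n))

theorem card_setoid_subtype {n : ℕ} (t : Finset (Fin n)) :
    Nat.card (Setoid {x : Fin n // x ∉ t}) = sb (n - t.card) := by
  have e1 : {x : Fin n // x ∉ t} ≃ {x : Fin n // x ∈ tᶜ} :=
    Equiv.subtypeEquivRight (by simp)
  have e2 : {x : Fin n // x ∈ tᶜ} ≃ Fin (tᶜ.card) := tᶜ.equivFin
  have hc : tᶜ.card = n - t.card := by
    rw [Finset.card_compl, Fintype.card_fin]
  rw [sb]
  exact Nat.card_congr (setoidCongr ((e1.trans e2).trans (finCongr hc)))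

theorem sb_succ (n : ℕ) : sb (n + 1) = ∑ k ∈ Finset.range (n + 1), n.choose k * sb k := by
  have h1 : sb (n + 1) = Nat.card (Setoid (Option (Fin n))) :=
    Nat.card_congr (setoidCongr (finSuccEquiv n))
  have h2 : Nat.card (Setoid (Option (Fin n)))
      = Nat.card (Σ t : Finset (Fin n), Setoid {x : Fin n // x ∉ t}) :=
    Nat.card_congr setoidOptionEquiv
  rw [h1, h2, nat_card_sigma]
  have h3 : ∀ t : Finset (Fin n), Nat.card (Setoid {x : Fin n // x ∉ t}) = sb (n - t.card) :=
    card_setoid_subtype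
  simp_rw [h3]
  rw [← Finset.powerset_univ]
  rw [Finset.sum_powerset_apply_card (fun m => sb (n - m))]
  simp only [Finset.card_univ, Fintype.card_fin, smul_eq_mul]
  rw [← Finset.sum_range_reflect]
  apply Finset.sum_congr rfl
  intro m hm
  rw [Finset.mem_range, Nat.lt_succ_iff] at hm
  have : n + 1 - 1 - m = n - m := by omega
  rw [this, Nat.sub_sub_self hm, Nat.choose_symm hm]

theorem bellNumber_eq_sb (n : ℕ) :
    Nat.card (Finpartition (Finset.univ : Finset (Fin n))) = sb n := bell_card n

theorem sb_zero : sb 0 = 1 := by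
  have : Subsingleton (Setoid (Fin 0)) := ⟨fun a b => Setoid.ext fun x => x.elim0⟩
  have : Nonempty (Setoid (Fin 0)) := ⟨⊥⟩
  rw [sb, Nat.card_eq_one_iff_unique]
  exact ⟨‹_›, ‹_›⟩

open PowerSeries Finset

noncomputable def w (n : ℕ) : PowerSeries ℚ := rescale (-1) ((invOneSubPow ℚ n : (PowerSeries ℚ)ˣ) : PowerSeries ℚ)

lemma rescale_one_sub : rescale (-1 : ℚ) (1 - X) = 1 + X := by
  rw [map_sub, map_one, rescale_neg_one_X, sub_neg_eq_add]

lemma w_mul (n : ℕ) : w n * (1 + X) ^ n = 1 := by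
  have h1 : ((invOneSubPow ℚ n : (PowerSeries ℚ)ˣ) : PowerSeries ℚ) * (1 - X) ^ n = 1 := by
    rw [← invOneSubPow_inv_eq_one_sub_pow]
    exact (invOneSubPow ℚ n).val_inv
  calc w n * (1 + X) ^ n
      = rescale (-1 : ℚ) (((invOneSubPow ℚ n : (PowerSeries ℚ)ˣ) : PowerSeries ℚ) * (1 - X) ^ n) := by
        rw [map_mul, map_pow, rescale_one_sub, w]
    _ = 1 := by rw [h1, map_one]

lemma constCoeff_one_add_X : constantCoeff (1 + X : PowerSeries ℚ) ≠ 0 := by simp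

lemma one_add_X_ne_zero : (1 + X : PowerSeries ℚ) ≠ 0 := fun h => by
  apply constCoeff_one_add_X; rw [h, map_zero]

lemma inv_pow_eq_w (n : ℕ) : ((1 + X : PowerSeries ℚ)⁻¹) ^ n = w n := by
  have h2 : ((1 + X : PowerSeries ℚ)⁻¹) ^ n * (1 + X) ^ n = 1 := by
    rw [← mul_pow, PowerSeries.inv_mul_cancel _ constCoeff_one_add_X, one_pow]
  have := pow_ne_zero n one_add_X_ne_zero
  have h3 := w_mul n
  exact mul_right_cancel₀ this (h2.trans h3.symm)

lemma coeff_w_succ (n m : ℕ) :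
    PowerSeries.coeff m (w (n + 1)) = (-1 : ℚ) ^ m * ((n + m).choose n : ℚ) := by
  rw [w, invOneSubPow_val_succ_eq_mk_add_choose, rescale_mk, coeff_mk]

lemma coeff_u_pow_succ (n k : ℕ) :
    PowerSeries.coeff k ((X * (1 + X : PowerSeries ℚ)⁻¹) ^ (n + 1)) =
      if n + 1 ≤ k then (-1 : ℚ) ^ (k - (n + 1)) * ((k - 1).choose n : ℚ) else 0 := by
  rw [mul_pow, inv_pow_eq_w, mul_comm, PowerSeries.coeff_mul_X_pow']
  by_cases h : n + 1 ≤ k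
  · rw [if_pos h, if_pos h, coeff_w_succ]
    have h2 : n + (k - (n + 1)) = k - 1 := by omega
    rw [h2]
  · rw [if_neg h, if_neg h]

open Finset

lemma alt_sum_choose (d : ℕ) :
    ∑ l ∈ range (d + 1), (-1 : ℚ) ^ (d - l) * (d.choose l : ℚ) = if d = 0 then 1 else 0 := by
  have h := add_pow (1 : ℚ) (-1) d
  simp only [one_pow, one_mul, add_neg_cancel] at h
  rw [← h]
  cases d with
  | zero => simp
  | succ d => simp [zero_pow]

lemma innerAltSum (m i : ℕ) (hi : i ≤ m) :
    ∑ j ∈ Ico i (m + 1), (-1 : ℚ) ^ (m - j) * (m.choose j : ℚ) * (j.choose i : ℚ)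
      = if i = m then 1 else 0 := by
  have key : ∀ j ∈ Ico i (m + 1),
      (-1 : ℚ) ^ (m - j) * (m.choose j : ℚ) * (j.choose i : ℚ)
        = (m.choose i : ℚ) * ((-1 : ℚ) ^ (m - j) * ((m - i).choose (j - i) : ℚ)) := by
    intro j hj
    rw [mem_Ico] at hj
    have h1 : (m.choose j) * (j.choose i) = (m.choose i) * ((m - i).choose (j - i)) :=
      Nat.choose_mul hj.1
    rw [mul_assoc, ← Nat.cast_mul, h1]
    push_cast
    ring
  rw [sum_congr rfl key, ← mul_sum]
  rw [sum_Ico_eq_sum_range]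
  have h2 : m + 1 - i = (m - i) + 1 := by omega
  rw [h2]
  have h3 : ∀ l ∈ range ((m - i) + 1),
      (-1 : ℚ) ^ (m - (i + l)) * (((m - i).choose (i + l - i)) : ℚ)
        = (-1 : ℚ) ^ ((m - i) - l) * (((m - i).choose l) : ℚ) := by
    intro l hl
    rw [mem_range] at hl
    have : m - (i + l) = (m - i) - l := by omega
    rw [this, Nat.add_sub_cancel_left]
  rw [sum_congr rfl h3, alt_sum_choose]
  by_cases him : i = m
  · simp [him]
  · have : m - i ≠ 0 := by omega
    simp [him, this]

lemma binomial_inversion (F : ℕ → ℚ)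
    (hF : ∀ j, F (j + 1) = ∑ i ∈ range (j + 1), (j.choose i : ℚ) * F i) (m : ℕ) :
    ∑ j ∈ range (m + 1), F (j + 1) * ((-1 : ℚ) ^ (m - j) * (m.choose j : ℚ)) = F m := by
  have step1 : ∀ j ∈ range (m + 1),
      F (j + 1) * ((-1 : ℚ) ^ (m - j) * (m.choose j : ℚ))
        = ∑ i ∈ range (j + 1),
            (-1 : ℚ) ^ (m - j) * (m.choose j : ℚ) * (j.choose i : ℚ) * F i := by
    intro j _
    rw [hF j, Finset.sum_mul, Finset.sum_congr rfl]
    intro i _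
    ring
  rw [sum_congr rfl step1]
  have swap : ∑ j ∈ range (m + 1), ∑ i ∈ range (j + 1),
        (-1 : ℚ) ^ (m - j) * (m.choose j : ℚ) * (j.choose i : ℚ) * F i
      = ∑ i ∈ range (m + 1), ∑ j ∈ Ico i (m + 1),
        (-1 : ℚ) ^ (m - j) * (m.choose j : ℚ) * (j.choose i : ℚ) * F i := by
    simp_rw [range_eq_Ico]
    rw [← sum_Ico_Ico_comm 0 (m + 1)]
  rw [swap]
  have step2 : ∀ i ∈ range (m + 1),
      ∑ j ∈ Ico i (m + 1), (-1 : ℚ) ^ (m - j) * (m.choose j : ℚ) * (j.choose i : ℚ) * F i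
        = (if i = m then 1 else 0) * F i := by
    intro i hi
    rw [mem_range] at hi
    rw [← sum_mul, innerAltSum m i (by omega)]
  rw [sum_congr rfl step2]
  simp

theorem bellNumber_eq (n : ℕ) : bellNumber n = sb n := bell_card n

theorem bell_rec (j : ℕ) :
    (bellNumber (j + 1) : ℚ) = ∑ i ∈ Finset.range (j + 1), (j.choose i : ℚ) * (bellNumber i : ℚ) := by
  simp_rw [bellNumber_eq, sb_succ]
  push_cast
  rfl

end BellAux

open BellAux Finset PowerSeries in
/-- The ordinary generating function `B(t) = Σ Bₙ tⁿ` of the Bell numbers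
satisfies `B(t/(1+t)) = t·B(t) + 1` in `ℚ[[t]]`. -/
theorem bell_ogf_tau_equation :
    PowerSeries.substPS (PowerSeries.X * (1 + PowerSeries.X)⁻¹)
        (PowerSeries.mk fun n => (bellNumber n : ℚ))
      = PowerSeries.X * (PowerSeries.mk fun n => (bellNumber n : ℚ)) + 1 := by
  have hb0 : (bellNumber 0 : ℚ) = 1 := by rw [bellNumber_eq, sb_zero]; norm_num
  apply PowerSeries.ext
  intro k
  rw [PowerSeries.substPS, coeff_mk]
  simp only [coeff_mk]
  cases k with
  | zero =>
    simp only [range_one, sum_singleton, pow_zero, map_add, map_mul, map_one]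
    simp [hb0]
  | succ m =>
    rw [Finset.sum_range_succ']
    have hz : (bellNumber 0 : ℚ) * (PowerSeries.coeff (R := ℚ) (m + 1)) ((X * (1 + X)⁻¹) ^ 0) = 0 := by
      simp
    rw [hz, add_zero]
    have hterm : ∀ j ∈ range (m + 1),
        (bellNumber (j + 1) : ℚ) * (PowerSeries.coeff (R := ℚ) (m + 1)) ((X * (1 + X)⁻¹) ^ (j + 1))
          = (bellNumber (j + 1) : ℚ) * ((-1 : ℚ) ^ (m - j) * (m.choose j : ℚ)) := by
      intro j hj
      rw [mem_range] at hj
      rw [coeff_u_pow_succ, if_pos (by omega)]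
      have h1 : m + 1 - (j + 1) = m - j := by omega
      have h2 : m + 1 - 1 = m := by omega
      rw [h1, h2]
    rw [Finset.sum_congr rfl hterm,
      binomial_inversion (fun n => (bellNumber n : ℚ)) bell_rec m]
    have : (PowerSeries.coeff (m + 1))
        (X * (PowerSeries.mk fun n => (bellNumber n : ℚ)) + 1) = (bellNumber m : ℚ) := by
      rw [map_add, PowerSeries.coeff_succ_X_mul, coeff_mk, PowerSeries.coeff_one,
        if_neg (by omega), add_zero]
    rw [this]

end
end

section
/- Let b_k denote the Bernoulli numbers (with b_1 = −1/2) and define S(t) := t + t²/2 + Σ_{n≥1} b_{2n} t^{2n+1} ∈ ℚ[[t]]. Let B(x,t) := Σ_{n≥0} B_n(x) tⁿ ∈ (ℚ[x])[[t]] be the ordinary generating function of the Bernoulli polynomials. Then the identity t·B(x,t) = S(t/(1+t−tx)) holds in (ℚ[x])[[t]], where S(t/(1+t−tx)) denotes substitution of the power series t/(1+t−tx) (which has zero constant term in t, since 1+t−tx is a unit of (ℚ[x])[[t]]) into S. -/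
noncomputable section

/-- The power series `S(t) = t + t²/2 + Σ_{n≥1} b_{2n} t^{2n+1} ∈ ℚ[[t]]`, where `b_k`
are the Bernoulli numbers (with `b₁ = −1/2`). Note `b₀ = 1`, so the coefficient of `t` is
`bernoulli 0 = 1`, the coefficient of `t²` is `1/2`, and for odd `n = 2k+1 ≥ 3` the
coefficient is `b_{2k} = bernoulli (n-1)`. -/
def seriesS : PowerSeries ℚ :=
  PowerSeries.mk fun n =>
    if n = 2 then 1 / 2 else if n % 2 = 1 then bernoulli (n - 1) else 0

open PowerSeries Nat

/-- Hockey-stick identity. -/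
lemma aux_hockey_stick (n : ℕ) : ∀ m : ℕ,
    ∑ i ∈ Finset.range (m+1), (i+n).choose n = (m+n+1).choose (n+1) := by
  intro m
  induction m with
  | zero => simp
  | succ m ih =>
      rw [Finset.sum_range_succ, ih, show m+1+n = m+n+1 by omega,
        Nat.choose_succ_succ' (m+n+1) n]
      omega

/-- The geometric series is inverse to `1 - r·X`. -/
lemma aux_geom_mul {R : Type*} [CommRing R] (r : R) :
    (1 - PowerSeries.C r * PowerSeries.X) * PowerSeries.mk (fun j => r^j) = 1 := by
  ext n
  rw [sub_mul, one_mul, map_sub, mul_assoc]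
  cases n with
  | zero => simp
  | succ n => simp [PowerSeries.coeff_succ_X_mul, pow_succ, mul_comm]

/-- Coefficients of powers of the geometric series. -/
lemma aux_coeff_geom_pow {R : Type*} [CommRing R] (r : R) (n : ℕ) : ∀ m : ℕ,
    PowerSeries.coeff m ((PowerSeries.mk (fun j => r^j))^(n+1))
      = ((m+n).choose n : R) * r^m := by
  induction n with
  | zero => intro m; simp
  | succ n ih =>
      intro m
      rw [pow_succ, PowerSeries.coeff_mul, Finset.Nat.sum_antidiagonal_eq_sum_range_succ_mk]
      have h : ∀ i ∈ Finset.range (m+1),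
          PowerSeries.coeff i ((PowerSeries.mk (fun j => r^j))^(n+1)) *
            PowerSeries.coeff (m-i) (PowerSeries.mk (fun j => r^j))
          = ((i+n).choose n : R) * r^m := by
        intro i hi
        rw [ih i, PowerSeries.coeff_mk, mul_assoc, ← pow_add,
          Nat.add_sub_cancel' (Nat.lt_succ_iff.mp (Finset.mem_range.mp hi))]
      rw [Finset.sum_congr rfl h, ← Finset.sum_mul, ← Nat.cast_sum, aux_hockey_stick,
        show m+n+1 = m+(n+1) by omega]

/-- Addition formula for Bernoulli polynomials (evaluated over `ℚ`). -/
lemma aux_bernoulli_poly_add (x y : ℚ) (n : ℕ) :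
    (Polynomial.bernoulli n).eval (x + y)
      = ∑ k ∈ Finset.range (n+1),
          (n.choose k : ℚ) * (Polynomial.bernoulli k).eval x * y ^ (n - k) := by
  have key : (PowerSeries.mk fun n => Polynomial.aeval (x+y) ((1 / n ! : ℚ) • Polynomial.bernoulli n))
      = (PowerSeries.mk fun n => Polynomial.aeval x ((1 / n ! : ℚ) • Polynomial.bernoulli n))
          * rescale y (exp ℚ) := by
    have h1 := Polynomial.bernoulli_generating_function (x+y)
    have h2 := Polynomial.bernoulli_generating_function x
    have hexp : (exp ℚ - 1) ≠ 0 := by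
      intro h
      have := congrArg (PowerSeries.coeff 1) h
      simp [coeff_exp] at this
    apply mul_right_cancel₀ hexp
    rw [h1, show ∀ a b c : PowerSeries ℚ, a * b * c = (a * c) * b from fun a b c => by ring,
      h2, mul_assoc, exp_mul_exp_eq_exp_add]
  have hc := congrArg (PowerSeries.coeff n) key
  rw [coeff_mk, PowerSeries.coeff_mul, Finset.Nat.sum_antidiagonal_eq_sum_range_succ_mk] at hc
  simp only [coeff_mk, coeff_rescale, coeff_exp, map_smul, smul_eq_mul,
    Polynomial.coe_aeval_eq_eval, Algebra.algebraMap_self, RingHom.id_apply,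
    Nat.succ_eq_add_one] at hc
  have hn : (n ! : ℚ) ≠ 0 := Nat.cast_ne_zero.mpr n.factorial_ne_zero
  calc Polynomial.eval (x + y) (Polynomial.bernoulli n)
      = (n ! : ℚ) * (1 / n ! * Polynomial.eval (x + y) (Polynomial.bernoulli n)) := by
        field_simp
    _ = (n ! : ℚ) * ∑ k ∈ Finset.range (n+1),
          1 / (k ! : ℚ) * Polynomial.eval x (Polynomial.bernoulli k)
            * (y ^ (n - k) * (1 / ((n - k)! : ℚ))) := by rw [hc]
    _ = _ := by
        rw [Finset.mul_sum]
        refine Finset.sum_congr rfl fun k hk => ?_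
        have hk' : k ≤ n := Nat.lt_succ_iff.mp (Finset.mem_range.mp hk)
        have h1 : (k ! : ℚ) ≠ 0 := Nat.cast_ne_zero.mpr k.factorial_ne_zero
        have h2 : ((n-k) ! : ℚ) ≠ 0 := Nat.cast_ne_zero.mpr (n-k).factorial_ne_zero
        rw [Nat.cast_choose ℚ hk']
        field_simp

/-- The Bernoulli polynomial expanded around `1` in terms of `bernoulli'`. -/
lemma aux_bernoulli_poly_eq_sum (m : ℕ) :
    Polynomial.bernoulli m
      = ∑ k ∈ Finset.range (m+1),
          Polynomial.C ((m.choose k : ℚ) * bernoulli' k) * (Polynomial.X - 1) ^ (m - k) := by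
  apply Polynomial.funext
  intro y
  rw [Polynomial.eval_finset_sum]
  have h := aux_bernoulli_poly_add 1 (y - 1) m
  rw [show (1 : ℚ) + (y - 1) = y by ring] at h
  rw [h]
  refine Finset.sum_congr rfl fun k hk => ?_
  simp [Polynomial.bernoulli_eval_one, mul_assoc]

lemma aux_seriesS_coeff_succ (k : ℕ) :
    PowerSeries.coeff (k+1) seriesS = bernoulli' k := by
  rw [seriesS, coeff_mk]
  rcases Nat.lt_or_ge k 2 with hk | hk
  · interval_cases k
    · norm_num [bernoulli'_zero]
    · norm_num [bernoulli'_one]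
  · have h2 : k + 1 ≠ 2 := by omega
    rw [if_neg h2]
    rcases Nat.even_or_odd k with he | ho
    · have hk0 := Nat.even_iff.mp he
      have : (k+1) % 2 = 1 := by omega
      rw [if_pos this]
      simp only [Nat.add_sub_cancel]
      exact bernoulli_eq_bernoulli'_of_ne_one (by rintro rfl; exact (Nat.not_even_one) he)
    · have hk1 := Nat.odd_iff.mp ho
      have : (k+1) % 2 ≠ 1 := by omega
      rw [if_neg this, eq_comm]
      exact bernoulli'_eq_zero_of_odd ho (by omega)

open PowerSeries in
/-- In `(ℚ[x])[[t]]` one has `t·B(x,t) = S(t/(1+t−tx))`, where `B(x,t)`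
is the ordinary generating function of the Bernoulli polynomials and the inverse of the
unit `1+t−tx` is computed via `invOfUnit`. -/
theorem bernoulli_ogf_eq_seriesS_subst :
    X * (mk fun n => Polynomial.bernoulli n)
      = substPS (X * invOfUnit (1 + X - C (Polynomial.X : Polynomial ℚ) * X) 1)
          (PowerSeries.map (Polynomial.C : ℚ →+* Polynomial ℚ) seriesS) := by
  set r : Polynomial ℚ := Polynomial.X - 1 with hr
  set W : PowerSeries (Polynomial ℚ) := PowerSeries.mk (fun j => r ^ j) with hW
  set a : PowerSeries (Polynomial ℚ) :=
    1 + X - C (Polynomial.X : Polynomial ℚ) * X with ha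
  have haW : a * W = 1 := by
    have : a = 1 - C r * X := by
      rw [ha, hr, map_sub, map_one, sub_mul, one_mul]; ring
    rw [this]
    exact aux_geom_mul r
  have hinv : invOfUnit a 1 = W := by
    have h1 : a * invOfUnit a 1 = 1 := by
      apply mul_invOfUnit
      rw [ha]
      simp
    calc invOfUnit a 1 = (W * a) * invOfUnit a 1 := by rw [mul_comm W a, haW, one_mul]
      _ = W * (a * invOfUnit a 1) := by ring
      _ = W := by rw [h1, mul_one]
  rw [hinv]
  ext N : 1
  rw [substPS, coeff_mk]
  cases N with
  | zero =>
      simp only [Finset.range_one, Finset.sum_singleton, pow_zero, coeff_zero_eq_constantCoeff,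
        map_one, mul_one, PowerSeries.coeff_map, seriesS, coeff_mk]
      norm_num
  | succ m =>
      rw [PowerSeries.coeff_succ_X_mul, coeff_mk, Finset.sum_range_succ']
      have hzero : PowerSeries.coeff 0
            (PowerSeries.map (Polynomial.C : ℚ →+* Polynomial ℚ) seriesS)
          * PowerSeries.coeff (m+1) ((X * W) ^ 0) = 0 := by
        simp [PowerSeries.coeff_map, seriesS, coeff_mk]
      rw [hzero, add_zero]
      rw [aux_bernoulli_poly_eq_sum m]
      refine Finset.sum_congr rfl fun k hk => ?_
      have hk' : k ≤ m := Nat.lt_succ_iff.mp (Finset.mem_range.mp hk)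
      rw [mul_pow, show (m + 1 : ℕ) = (m - k) + (k + 1) by omega,
        PowerSeries.coeff_X_pow_mul, aux_coeff_geom_pow r k (m - k),
        Nat.sub_add_cancel hk', PowerSeries.coeff_map, aux_seriesS_coeff_succ]
      rw [map_mul, map_natCast (Polynomial.C : ℚ →+* Polynomial ℚ)]
      ring

end
end

section
/- Let x ∈ ℂ and let t ∈ ℂ with t ≠ −1 and 1 + kt − tx ≠ 0 for every integer k ≥ 1. Define F(x,t) := (1/t)·Σ_{k≥1} t²/(1+kt−tx)² for t ≠ 0 (the series converges absolutely), and for t = 0 interpret both sides as 0 appropriately; then for t ≠ 0 with t/(1+t) also satisfying the nonvanishing conditions, F satisfies the functional equation F(x, t/(1+t)) = (1+t)·F(x,t) − t(1+t)/(1+t−tx)². Equivalently, G(x,t) := Σ_{k≥1} t²/(1+kt−tx)² satisfies G(x, t/(1+t)) = G(x,t) − t²/(1+t−tx)². -/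
noncomputable section

open Filter

lemma summable_aux (x t : ℂ) (ht0 : t ≠ 0) :
    Summable (fun k : ℕ => t ^ 2 / (1 + (k + 1 : ℂ) * t - t * x) ^ 2) := by
  have htn : 0 < ‖t‖ := norm_pos_iff.mpr ht0
  obtain ⟨N, hN⟩ := exists_nat_ge (2 * ‖1 - t * x‖ / ‖t‖)
  have hg : Summable (fun k : ℕ => 4 / ((k : ℝ) + 1) ^ 2) := by
    have := (summable_nat_add_iff 1).2
      (Real.summable_one_div_nat_pow.mpr (by norm_num : 1 < 2))
    exact (this.mul_left 4).congr (fun n => by push_cast; ring)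
  refine Summable.of_norm_bounded_eventually_nat hg ?_
  filter_upwards [eventually_ge_atTop N] with k hk
  have hk' : 2 * ‖1 - t * x‖ / ‖t‖ ≤ (k : ℝ) := le_trans hN (by exact_mod_cast hk)
  have h1 : ‖1 - t * x‖ ≤ ((k : ℝ) + 1) * ‖t‖ / 2 := by
    rw [div_le_iff₀ htn] at hk'
    nlinarith [norm_nonneg (1 - t * x)]
  have hnk : ‖((k : ℂ) + 1) * t‖ = ((k : ℝ) + 1) * ‖t‖ := by
    rw [norm_mul]
    congr 1
    rw [show ((k : ℂ) + 1) = ((k + 1 : ℕ) : ℂ) by push_cast; ring, Complex.norm_natCast]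
    push_cast; ring
  have h2 : ((k : ℝ) + 1) * ‖t‖ / 2 ≤ ‖1 + (k + 1 : ℂ) * t - t * x‖ := by
    have heq : (1 + (k + 1 : ℂ) * t - t * x) = (k + 1 : ℂ) * t + (1 - t * x) := by ring
    rw [heq]
    have htri : ‖((k : ℂ) + 1) * t‖ ≤ ‖((k : ℂ) + 1) * t + (1 - t * x)‖ + ‖1 - t * x‖ := by
      have := norm_add_le (((k : ℂ) + 1) * t + (1 - t * x)) (-(1 - t * x))
      rw [show ((k : ℂ) + 1) * t + (1 - t * x) + -(1 - t * x) = ((k : ℂ) + 1) * t by ring,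
        norm_neg] at this
      exact this
    rw [hnk] at htri
    linarith
  calc ‖t ^ 2 / (1 + (k + 1 : ℂ) * t - t * x) ^ 2‖
      = ‖t‖ ^ 2 / ‖1 + (k + 1 : ℂ) * t - t * x‖ ^ 2 := by
        rw [norm_div, norm_pow, norm_pow]
    _ ≤ ‖t‖ ^ 2 / (((k : ℝ) + 1) * ‖t‖ / 2) ^ 2 := by gcongr
    _ = 4 / ((k : ℝ) + 1) ^ 2 := by
        rw [div_eq_div_iff (by positivity) (by positivity)]; ring

/-- The function `G(x,t) = Σ_{k≥1} t²/(1+kt−tx)²`. -/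
def seriesG (x t : ℂ) : ℂ := ∑' k : ℕ, t ^ 2 / (1 + (k + 1 : ℂ) * t - t * x) ^ 2

/-- The function `F(x,t) = (1/t)·Σ_{k≥1} t²/(1+kt−tx)²` (equal to `(1/t)·Ψ'((1+t−tx)/t)`). -/
def seriesF (x t : ℂ) : ℂ := (1 / t) * seriesG x t

/-- For `x, t ∈ ℂ` with `t ≠ 0`, `t ≠ −1` and `1+kt−tx ≠ 0` for all
integers `k ≥ 1` (for `t` and for `t/(1+t)`), the series defining `G(x,t)` converges
absolutely, and `F(x,t) = (1/t)·Σ_{k≥1} t²/(1+kt−tx)²` satisfies the functional equation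
`F(x, t/(1+t)) = (1+t)·F(x,t) − t(1+t)/(1+t−tx)²`; equivalently
`G(x, t/(1+t)) = G(x,t) − t²/(1+t−tx)²`. -/
theorem trigamma_solution_of_bernoulli_tau_equation (x t : ℂ)
    (ht0 : t ≠ 0) (ht1 : t ≠ -1)
    (h : ∀ k : ℕ, 1 + (k + 1 : ℂ) * t - t * x ≠ 0)
    (h' : ∀ k : ℕ, 1 + (k + 1 : ℂ) * (t / (1 + t)) - (t / (1 + t)) * x ≠ 0) :
    Summable (fun k : ℕ => t ^ 2 / (1 + (k + 1 : ℂ) * t - t * x) ^ 2) ∧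
    seriesF x (t / (1 + t))
      = (1 + t) * seriesF x t - t * (1 + t) / (1 + t - t * x) ^ 2 ∧
    seriesG x (t / (1 + t)) = seriesG x t - t ^ 2 / (1 + t - t * x) ^ 2 := by
  have ht1' : (1 + t) ≠ 0 := fun hc => ht1 (by linear_combination hc)
  have hsum := summable_aux x t ht0
  have hs0 : t / (1 + t) ≠ 0 := div_ne_zero ht0 ht1'
  have hx0 : (1 + t - t * x) ≠ 0 := by
    have := h 0; rwa [show (1 + ((0 : ℕ) + 1 : ℂ) * t - t * x) = 1 + t - t * x by
      push_cast; ring] at this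
  -- each term of G at t/(1+t) equals the shifted term of G at t
  have hGterm : ∀ k : ℕ,
      (t / (1 + t)) ^ 2 / (1 + ((k : ℂ) + 1) * (t / (1 + t)) - (t / (1 + t)) * x) ^ 2
        = t ^ 2 / (1 + (((k + 1 : ℕ) : ℂ) + 1) * t - t * x) ^ 2 := by
    intro k
    have hd : (1 + (((k + 1 : ℕ) : ℂ) + 1) * t - t * x) ≠ 0 := h (k + 1)
    have hd' : (1 + ((k : ℂ) + 1) * (t / (1 + t)) - (t / (1 + t)) * x) ≠ 0 := h' k
    field_simp
    push_cast; ring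
  have hG : seriesG x (t / (1 + t)) = seriesG x t - t ^ 2 / (1 + t - t * x) ^ 2 := by
    unfold seriesG
    rw [tsum_congr hGterm]
    have h2 := Summable.tsum_eq_zero_add hsum
    simp only [Nat.cast_zero, zero_add, one_mul] at h2
    linear_combination -h2
  refine ⟨hsum, ?_, hG⟩
  rw [seriesF, seriesF, hG]
  field_simp

end
end

section
/- Let f ∈ ℂ((t)) be a formal Laurent series satisfying f(t/(1+t)) = f(t). Then f is a constant, i.e. f ∈ ℂ. In other words, the field of invariants of the automorphism τ : f(t) ↦ f(t/(1+t)) of ℂ((t)) is exactly ℂ. -/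
noncomputable section

/-- Substitution of a power series `u` (with zero constant term and nonzero linear
coefficient) into a formal Laurent series `w`. -/
def LaurentSeries.substL {F : Type*} [Field F] (u : PowerSeries F) (w : LaurentSeries F) :
    LaurentSeries F :=
  ((PowerSeries.substPS u w.powerSeriesPart : PowerSeries F) : LaurentSeries F)
    * ((u : LaurentSeries F) ^ w.order)

/-- The formal derivative `d/dt` of a formal Laurent series. -/
def LaurentSeries.lderiv {F : Type*} [Field F] (w : LaurentSeries F) : LaurentSeries F :=
  { coeff := fun n => ((n + 1 : ℤ) : F) * w.coeff (n + 1)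
    isPWO_support' := by
      refine Set.IsPWO.mono (Set.IsPWO.image_of_monotone w.isPWO_support
        (f := fun m : ℤ => m - 1) fun a b h => by simpa using h) ?_
      intro n hn
      have h1 : w.coeff (n + 1) ≠ 0 := fun h => hn (by simp [Function.mem_support, h])
      exact ⟨n + 1, h1, by ring⟩ }

/-- A formal Laurent series is convergent (i.e. belongs to `ℂ({t})`) if its coefficients
`a_n` satisfy `Σ_{n ≥ 0} |a_n| rⁿ < ∞` for some real `r > 0`. -/
def LaurentSeries.IsConvergent (w : LaurentSeries ℂ) : Prop :=
  ∃ r : ℝ, 0 < r ∧ Summable fun n : ℕ => ‖w.coeff (n : ℤ)‖ * r ^ n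

/-- `w ∈ ℂ((t))` is differentially transcendental over the field `ℂ({t})` of convergent
Laurent series: no nonzero polynomial with convergent Laurent series coefficients
vanishes at `(w, w', …, w⁽ⁿ⁾)`. -/
def LaurentSeries.StronglyDTransc (w : LaurentSeries ℂ) : Prop :=
  ∀ (n : ℕ) (P : MvPolynomial (Fin (n + 1)) (LaurentSeries ℂ)),
    (∀ m, LaurentSeries.IsConvergent (MvPolynomial.coeff m P)) → P ≠ 0 →
    MvPolynomial.eval (fun i : Fin (n + 1) => LaurentSeries.lderiv^[(i : ℕ)] w) P ≠ 0

/-- The power series `t/(1+t)` over a field. -/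
def tauArg (F : Type*) [Field F] : PowerSeries F :=
  PowerSeries.X * (1 + PowerSeries.X)⁻¹

open PowerSeries LaurentSeries

/-- `(1+t)⁻¹` as a power series. -/
private def Vps : PowerSeries ℂ := (1 + PowerSeries.X)⁻¹

private lemma constCoeff_onePlusX : constantCoeff (1 + X : PowerSeries ℂ) = 1 := by simp

private lemma onePlusX_mul_V : ((1 + X) * Vps : PowerSeries ℂ) = 1 :=
  PowerSeries.mul_inv_cancel _ (by simp)

private lemma constCoeff_V : constantCoeff Vps = 1 := by
  rw [Vps, PowerSeries.constantCoeff_inv, constCoeff_onePlusX, inv_one]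

private lemma coeff_one_onePlusX : coeff 1 (1 + X : PowerSeries ℂ) = 1 := by
  simp [PowerSeries.coeff_one]

private lemma coeff_one_V : coeff 1 Vps = -1 := by
  have h := congrArg (coeff 1) onePlusX_mul_V
  rw [coeff_one_mul, coeff_one_onePlusX, constCoeff_V, constCoeff_onePlusX] at h
  simp only [PowerSeries.coeff_one, one_ne_zero, if_false] at h
  linear_combination h

private lemma coeff_one_pow_of_const_one {v : PowerSeries ℂ} (h0 : constantCoeff v = 1)
    (n : ℕ) : coeff 1 (v ^ n) = n * coeff 1 v := by
  induction n with
  | zero => simp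
  | succ n ih =>
    rw [pow_succ, coeff_one_mul, ih]
    have hc : constantCoeff (v ^ n) = 1 := by rw [map_pow, h0, one_pow]
    rw [hc, h0]
    push_cast
    ring

private lemma constCoeff_V_pow (n : ℕ) : constantCoeff (Vps ^ n) = 1 := by
  rw [map_pow, constCoeff_V, one_pow]

private lemma coeff_one_V_pow (n : ℕ) : coeff 1 (Vps ^ n) = -n := by
  rw [coeff_one_pow_of_const_one constCoeff_V, coeff_one_V]; ring

private lemma tauArg_eq : tauArg ℂ = X * Vps := rfl

private lemma coeff_tau_pow (k n : ℕ) :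
    coeff k ((tauArg ℂ) ^ n) = if n ≤ k then coeff (k - n) (Vps ^ n) else 0 := by
  rw [tauArg_eq, mul_pow, coeff_X_pow_mul']

private lemma coeff_tau_pow_self (n : ℕ) : coeff n ((tauArg ℂ) ^ n) = 1 := by
  rw [coeff_tau_pow, if_pos le_rfl, Nat.sub_self, coeff_zero_eq_constantCoeff,
    constCoeff_V_pow]

private lemma coeff_tau_pow_succ (n : ℕ) : coeff (n + 1) ((tauArg ℂ) ^ n) = -n := by
  rw [coeff_tau_pow, if_pos (Nat.le_succ n), Nat.succ_sub le_rfl, Nat.sub_self,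
    coeff_one_V_pow]

/-- `Vps^d` for `d : ℤ`, as a power series. -/
private lemma V_zpow (d : ℤ) : ∃ W : PowerSeries ℂ,
    ((W : LaurentSeries ℂ)) = (Vps : LaurentSeries ℂ) ^ d ∧
    constantCoeff W = 1 ∧ coeff 1 W = -d := by
  have hmul : ((1 + X : PowerSeries ℂ) : LaurentSeries ℂ) * (Vps : LaurentSeries ℂ) = 1 := by
    rw [← PowerSeries.coe_mul, onePlusX_mul_V, PowerSeries.coe_one]
  cases d with
  | ofNat n =>
    refine ⟨Vps ^ n, ?_, constCoeff_V_pow n, ?_⟩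
    · rw [Int.ofNat_eq_coe, zpow_natCast, PowerSeries.coe_pow]
    · rw [coeff_one_V_pow]; simp
  | negSucc n =>
    refine ⟨(1 + X) ^ (n + 1), ?_, ?_, ?_⟩
    · rw [zpow_negSucc]
      refine (inv_eq_of_mul_eq_one_left ?_).symm
      rw [PowerSeries.coe_pow, ← mul_pow, hmul, one_pow]
    · rw [map_pow, constCoeff_onePlusX, one_pow]
    · rw [coeff_one_pow_of_const_one constCoeff_onePlusX, coeff_one_onePlusX]
      simp [Int.negSucc_eq]

private lemma coeff_substPS_zero (u p : PowerSeries ℂ) :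
    coeff 0 (PowerSeries.substPS u p) = constantCoeff p := by
  simp [PowerSeries.substPS, PowerSeries.coeff_mk]

private lemma constCoeff_substPS (u p : PowerSeries ℂ) :
    constantCoeff (PowerSeries.substPS u p) = constantCoeff p := by
  rw [← PowerSeries.coeff_zero_eq_constantCoeff_apply, coeff_substPS_zero]

private lemma coeff_one_tau : coeff 1 (tauArg ℂ) = 1 := by
  rw [tauArg_eq, coeff_one_mul, coeff_one_V, constCoeff_V]
  simp

private lemma coeff_substPS_one (p : PowerSeries ℂ) :
    coeff 1 (PowerSeries.substPS (tauArg ℂ) p) = coeff 1 p := by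
  rw [PowerSeries.substPS, PowerSeries.coeff_mk]
  rw [Finset.sum_range_succ, Finset.sum_range_one]
  rw [pow_zero, pow_one, coeff_one_tau]
  simp [PowerSeries.coeff_one]

/-- The field of invariants of the automorphism
`τ : f(t) ↦ f(t/(1+t))` of `ℂ((t))` is exactly `ℂ`. -/
theorem tau_invariants_eq_constants
    (f : LaurentSeries ℂ) (hf : LaurentSeries.substL (tauArg ℂ) f = f) :
    ∃ c : ℂ, f = HahnSeries.C c := by
  by_cases h0 : f = 0
  · exact ⟨0, by simp [h0]⟩
  set d := f.order with hd
  set p := f.powerSeriesPart with hp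
  set S := PowerSeries.substPS (tauArg ℂ) p with hS
  obtain ⟨W, hWcast, hW0, hW1⟩ := V_zpow d
  have hu : ((tauArg ℂ : PowerSeries ℂ) : LaurentSeries ℂ)
      = HahnSeries.single (1 : ℤ) (1 : ℂ) * (Vps : LaurentSeries ℂ) := by
    rw [tauArg_eq, PowerSeries.coe_mul, PowerSeries.coe_X]
  have hupow : ((tauArg ℂ : PowerSeries ℂ) : LaurentSeries ℂ) ^ d
      = HahnSeries.single d (1 : ℂ) * (Vps : LaurentSeries ℂ) ^ d := by
    have hs : (HahnSeries.single (1:ℤ) (1:ℂ)) ^ d = HahnSeries.single d 1 :=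
      (RatFunc.single_zpow d).symm
    rw [hu, mul_zpow, hs]
  have hf2 : ((S * W : PowerSeries ℂ) : LaurentSeries ℂ) * HahnSeries.single d (1 : ℂ) = f := by
    rw [PowerSeries.coe_mul, hWcast]
    rw [LaurentSeries.substL] at hf
    rw [← hf, hupow]
    ring
  have hkey : ∀ k : ℕ, f.coeff ((k : ℤ) + d) = coeff k (S * W) := by
    intro k
    rw [← hf2, HahnSeries.coeff_mul_single_add, mul_one, LaurentSeries.coeff_coe_powerSeries]
  -- first: the order d is zero
  have ha : f.coeff d ≠ 0 := fun h => h0 (HahnSeries.coeff_order_eq_zero.mp h)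
  have ha' : constantCoeff p = f.coeff d := by
    rw [hp, ← PowerSeries.coeff_zero_eq_constantCoeff, LaurentSeries.powerSeriesPart_coeff]
    norm_num
    rfl
  have h1 := hkey 1
  rw [coeff_one_mul, hW0, hW1, mul_one] at h1
  norm_num at h1
  have hfd1 : f.coeff ((1 : ℤ) + d) = coeff 1 p := by
    have := LaurentSeries.powerSeriesPart_coeff f 1
    rw [← hp, ← hd] at this
    rw [this]
    norm_num [add_comm]
  rw [hfd1, hS, coeff_substPS_one, constCoeff_substPS] at h1
  have hd0 : d = 0 := by
    have : (d : ℂ) * constantCoeff p = 0 := by linear_combination h1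
    rcases mul_eq_zero.mp this with h | h
    · exact_mod_cast h
    · exact absurd (ha' ▸ h) ha
  -- now f is (the image of) the power series S
  have hfS : ((S : PowerSeries ℂ) : LaurentSeries ℂ) = f := by
    rw [LaurentSeries.substL] at hf
    rw [← hf, ← hd, hd0, zpow_zero, mul_one, ← hp, ← hS]
  have hcoeff : ∀ k : ℕ, f.coeff (k : ℤ) = coeff k p := by
    intro k
    have := LaurentSeries.powerSeriesPart_coeff f k
    rw [← hp, ← hd, hd0] at this
    rw [this]
    norm_num
  have E : ∀ k : ℕ, coeff k p =
      ∑ n ∈ Finset.range (k + 1), coeff n p * coeff k ((tauArg ℂ) ^ n) := by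
    intro k
    rw [← hcoeff k, ← hfS, LaurentSeries.coeff_coe_powerSeries, hS, PowerSeries.substPS,
      PowerSeries.coeff_mk]
  -- all positive coefficients of p vanish
  have hvanish : ∀ m : ℕ, coeff (m + 1) p = 0 := by
    intro m
    induction m using Nat.strong_induction_on with
    | _ m ih =>
      have e := E (m + 2)
      rw [Finset.sum_range_succ, Finset.sum_range_succ] at e
      have hz : ∑ n ∈ Finset.range (m + 1), coeff n p * coeff (m + 2) ((tauArg ℂ) ^ n)
          = 0 := by
        refine Finset.sum_eq_zero fun n hn => ?_
        rcases Nat.eq_zero_or_pos n with rfl | hn1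
        · simp [PowerSeries.coeff_one]
        · obtain ⟨j, rfl⟩ := Nat.exists_eq_add_of_le hn1
          have hj : 1 + j < m + 1 := Finset.mem_range.mp hn
          rw [add_comm 1 j, ih j (by omega), zero_mul]
      rw [hz, zero_add, coeff_tau_pow_self, mul_one] at e
      have e2 : coeff (m + 1) p * coeff (m + 2) ((tauArg ℂ) ^ (m + 1)) = 0 := by
        linear_combination -e
      rw [coeff_tau_pow_succ] at e2
      rcases mul_eq_zero.mp e2 with h | h
      · exact h
      · exact absurd (neg_eq_zero.mp h)
          (Nat.cast_ne_zero.mpr (Nat.succ_ne_zero m))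
  refine ⟨constantCoeff p, ?_⟩
  ext i
  rw [HahnSeries.C_apply]
  rcases lt_trichotomy i 0 with hi | hi | hi
  · rw [HahnSeries.coeff_eq_zero_of_lt_order (by rw [← hd, hd0]; exact hi),
      HahnSeries.coeff_single_of_ne hi.ne]
  · subst hi
    rw [HahnSeries.coeff_single_same]
    have := hcoeff 0
    simpa using this
  · obtain ⟨k, rfl⟩ : ∃ k : ℕ, i = ((k : ℕ) : ℤ) + 1 := by
      refine ⟨(i - 1).toNat, ?_⟩
      omega
    rw [HahnSeries.coeff_single_of_ne (by positivity)]
    have := hcoeff (k + 1)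
    rw [hvanish k] at this
    push_cast at this ⊢
    exact this
end
end

section
/- Let ĝ := exp((e^t − 1)²/2) ∈ ℚ[[t]] (well defined since (e^t − 1)²/2 has zero constant term), write ĝ = Σ_{n≥0} c_n tⁿ, and let f := Σ_{n≥0} n!·c_n tⁿ ∈ ℚ[[t]] be the inverse Borel transform of ĝ (the ordinary generating function of the numbers n!·c_n, which count simple labeled graphs on n nodes all of whose components are complete bipartite graphs). Then f satisfies the second-order difference equation f(t/(1+2t)) + (t/(1+t))·f(t/(1+t)) − t·f(t) = 1 in ℚ[[t]], where f(t/(1+t)) and f(t/(1+2t)) denote substitution of the power series t/(1+t) and t/(1+2t) (both with zero constant term) into f. -/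
noncomputable section

namespace BipAux

open PowerSeries Finset

abbrev E : ℚ⟦X⟧ := exp ℚ
abbrev w : ℚ⟦X⟧ := PowerSeries.C (R := ℚ) (1/2) * (exp ℚ - 1)^2
abbrev G : ℚ⟦X⟧ := substPS w (exp ℚ)
abbrev Bor (h : ℚ⟦X⟧) : ℚ⟦X⟧ := mk fun n => (n.factorial : ℚ) * coeff n h
abbrev Sa (α : ℚ) : ℚ⟦X⟧ := mk fun j => (-α)^j
abbrev Ra (α : ℚ) : ℚ⟦X⟧ := rescale (-α) (exp ℚ)

lemma coeff_substPS (u p : ℚ⟦X⟧) (k : ℕ) :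
    coeff k (substPS u p) =
      ∑ n ∈ range (k + 1), coeff n p * coeff k (u ^ n) := by
  simp [substPS]

lemma hw0 : constantCoeff w = 0 := by simp [w]

lemma coeff_w_pow_zero {m n : ℕ} (h : n < m) : coeff n (w ^ m) = 0 := by
  have hx : (X : ℚ⟦X⟧) ∣ w := X_dvd_iff.mpr hw0
  exact X_pow_dvd_iff.mp (pow_dvd_pow_of_dvd hx m) n h

lemma coeff_G (n : ℕ) :
    coeff n G = ∑ m ∈ range (n + 1), (1 / m.factorial : ℚ) * coeff n (w ^ m) := by
  rw [coeff_substPS]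
  refine Finset.sum_congr rfl fun m _ => ?_
  rw [coeff_exp]; norm_num

lemma derivative_exp : d⁄dX ℚ (exp ℚ) = exp ℚ := by
  ext n
  rw [coeff_derivative, coeff_exp, coeff_exp]
  simp only [Algebra.algebraMap_self, RingHom.id_apply]
  field_simp [Nat.factorial_succ]
  rw [Nat.factorial_succ]; push_cast; ring

lemma hw' : d⁄dX ℚ w = exp ℚ * exp ℚ - exp ℚ := by
  rw [Derivation.leibniz, derivative_C, smul_zero, add_zero, sq, Derivation.leibniz]
  simp only [map_sub, derivative_exp, Derivation.map_one_eq_zero, sub_zero, smul_eq_mul]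
  have hC2 : (PowerSeries.C (R := ℚ)) (1/2) * 2 = 1 := by
    rw [← map_ofNat (PowerSeries.C (R := ℚ)) 2, ← map_mul]; norm_num
  linear_combination (exp ℚ * exp ℚ - exp ℚ) * hC2

lemma hODE : d⁄dX ℚ G = G * (exp ℚ * exp ℚ - exp ℚ) := by
  rw [← hw']
  ext n
  rw [coeff_derivative, coeff_G, Finset.sum_mul]
  have lhs : ∀ m ∈ range (n+2), (1 / m.factorial : ℚ) * coeff (n+1) (w^m) * (n+1)
      = (1 / m.factorial : ℚ) * coeff n (d⁄dX ℚ (w^m)) := by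
    intro m _
    rw [coeff_derivative]; ring
  rw [Finset.sum_congr rfl lhs]
  have step2 : ∀ m ∈ range (n+2), (1 / m.factorial : ℚ) * coeff n (d⁄dX ℚ (w^m))
      = (m : ℚ) / m.factorial * coeff n (w^(m-1) * d⁄dX ℚ w) := by
    intro m _
    rw [Derivation.leibniz_pow]
    simp only [smul_eq_mul]
    rw [map_nsmul, nsmul_eq_mul]
    push_cast
    ring
  rw [Finset.sum_congr rfl step2]
  -- reindex : m from 1 to n+1
  rw [Finset.sum_range_succ']
  simp only [Nat.cast_zero, Nat.factorial_zero, Nat.cast_one, zero_div, zero_mul, add_zero]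
  have step3 : ∀ m ∈ range (n+1), ((m+1 : ℕ) : ℚ) / (m+1).factorial * coeff n (w^(m+1-1) * d⁄dX ℚ w)
      = (1 / m.factorial : ℚ) * coeff n (w^m * d⁄dX ℚ w) := by
    intro m _
    rw [Nat.add_sub_cancel, Nat.factorial_succ]
    push_cast
    have hm : (m.factorial : ℚ) ≠ 0 := by positivity
    field_simp
  rw [Finset.sum_congr rfl step3]
  -- now RHS
  rw [coeff_mul]
  rw [Finset.Nat.sum_antidiagonal_eq_sum_range_succ
    (f := fun i j => coeff i G * coeff j (d⁄dX ℚ w))]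
  have expand : ∀ i ∈ range (n+1), coeff i G * coeff (n-i) (d⁄dX ℚ w)
      = ∑ m ∈ range (n+1), (1/m.factorial : ℚ) * (coeff i (w^m) * coeff (n-i) (d⁄dX ℚ w)) := by
    intro i hi
    rw [mem_range] at hi
    rw [coeff_G, Finset.sum_mul]
    rw [Finset.sum_subset (show range (i+1) ⊆ range (n+1) from Finset.range_subset_range.mpr (by omega))]
    · exact Finset.sum_congr rfl fun m _ => by ring
    · intro m _ hm
      rw [mem_range, not_lt] at hm
      rw [coeff_w_pow_zero (show i < m by omega)]
      ring
  rw [Finset.sum_congr rfl expand, Finset.sum_comm]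
  refine Finset.sum_congr rfl fun m _ => ?_
  rw [coeff_mul, Finset.Nat.sum_antidiagonal_eq_sum_range_succ
    (f := fun i j => coeff i (w^m) * coeff j (d⁄dX ℚ w)), Finset.mul_sum]

lemma coeff_G_zero : coeff 0 G = 1 := by
  rw [coeff_G]
  simp

lemma inv_one_add (α : ℚ) : (1 + PowerSeries.C (R := ℚ) α * X : ℚ⟦X⟧)⁻¹ = Sa α := by
  have h : constantCoeff (1 + PowerSeries.C (R := ℚ) α * X) ≠ 0 := by simp
  rw [PowerSeries.inv_eq_iff_mul_eq_one h]
  ext k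
  rw [mul_add, mul_one]
  cases k with
  | zero => simp
  | succ k =>
    have : (Sa α) * (PowerSeries.C (R := ℚ) α * X) = PowerSeries.C (R := ℚ) α * (Sa α * X) := by ring
    rw [map_add, this, coeff_C_mul, coeff_succ_mul_X]
    simp [pow_succ]
    ring

lemma coeff_Sa_pow (α : ℚ) (n k : ℕ) :
    coeff k ((Sa α) ^ (n+1)) = ((n+k).choose k : ℚ) * (-α)^k := by
  induction n generalizing k with
  | zero => simp
  | succ n ih =>
    rw [pow_succ, coeff_mul, Finset.Nat.sum_antidiagonal_eq_sum_range_succ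
      (f := fun i j => coeff i ((Sa α)^(n+1)) * coeff j (Sa α))]
    simp only [ih, coeff_mk]
    have : ∀ i ∈ range (k+1), ((n+i).choose i : ℚ) * (-α)^i * (-α)^(k-i)
        = ((n+i).choose n : ℚ) * (-α)^k := by
      intro i hi
      rw [mem_range] at hi
      rw [mul_assoc, ← pow_add, Nat.add_sub_cancel' (by omega), Nat.choose_symm_add]
    rw [Finset.sum_congr rfl this, ← Finset.sum_mul]
    congr 1
    have h2 : ∑ i ∈ range (k+1), ((n+i).choose n) = ((n+1+k).choose k) := by
      have := Finset.sum_Ico_eq_sum_range (f := fun m => m.choose n) (m := n) (n := n+k+1)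
      simp only [show n+k+1-n = k+1 by omega] at this
      have h3 : ∑ i ∈ Finset.Ico n (n+k+1), Nat.choose i n = (n+k+1).choose (n+1) := by
        rw [Finset.Ico_add_one_right_eq_Icc, Nat.sum_Icc_choose]
      rw [h3] at this
      rw [← this, show n+1+k = n+k+1 by omega]
      have := Nat.choose_symm_add (a := k) (b := n+1)
      rw [show k+(n+1) = n+k+1 by omega] at this
      omega
    exact_mod_cast h2

lemma coeff_Ra (α : ℚ) (d : ℕ) : coeff d (Ra α) = (-α)^d / d.factorial := by
  rw [coeff_rescale, coeff_exp]
  simp [div_eq_mul_inv]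

lemma coeff_GRa (α : ℚ) (j : ℕ) :
    coeff j (G * Ra α) =
      ∑ p ∈ range (j+1), coeff p G * ((-α)^(j-p) / (j-p).factorial) := by
  rw [coeff_mul, Finset.Nat.sum_antidiagonal_eq_sum_range_succ
    (f := fun i j' => coeff i G * coeff j' (Ra α))]
  exact Finset.sum_congr rfl fun p _ => by rw [coeff_Ra]

lemma tau_formula (α : ℚ) :
    substPS (X * (1 + PowerSeries.C (R := ℚ) α * X)⁻¹) (Bor G)
      = Bor (G * Ra α) + PowerSeries.C (R := ℚ) α * X * Bor (G * Ra α) := by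
  rw [inv_one_add]
  ext k
  rw [coeff_substPS]
  cases k with
  | zero =>
    simp only [zero_add, Finset.sum_range_one, pow_zero, map_one, coeff_zero_eq_constantCoeff]
    simp [coeff_GRa]
  | succ k =>
    have hXmul : (PowerSeries.C (R := ℚ) α * X * Bor (G * Ra α)) = (PowerSeries.C (R := ℚ) α * Bor (G * Ra α)) * X := by ring
    rw [map_add, hXmul, coeff_succ_mul_X, coeff_C_mul, coeff_mk, coeff_mk, coeff_GRa, coeff_GRa]
    -- LHS : peel n = 0
    rw [Finset.sum_range_succ']
    simp only [pow_zero, map_one, coeff_one, Nat.succ_ne_zero, if_false, mul_zero, add_zero]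
    have hterm : ∀ n ∈ range (k+1),
        coeff (n+1) (Bor G) * coeff (k+1) ((X * Sa α)^(n+1))
        = ((n+1).factorial : ℚ) * coeff (n+1) G * ((k.choose (k-n) : ℚ) * (-α)^(k-n)) := by
      intro n hn
      rw [mem_range] at hn
      rw [mul_pow, coeff_X_pow_mul' _ _ _, if_pos (by omega), coeff_Sa_pow, coeff_mk]
      rw [show k+1-(n+1) = k-n from by omega, show n + (k-n) = k from by omega]
    rw [Finset.sum_congr rfl hterm]
    -- RHS : distribute and peel p = k+1 from the first sum
    have peelR := Finset.sum_range_succ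
      (fun p => ((k+1).factorial : ℚ) * (coeff p G * ((-α)^(k+1-p) / (k+1-p).factorial))) (k+1)
    rw [Finset.mul_sum, Finset.mul_sum, peelR, Finset.mul_sum]
    simp only [Nat.sub_self, pow_zero, Nat.factorial_zero, Nat.cast_one, div_one, mul_one]
    rw [add_right_comm, ← Finset.sum_add_distrib]
    -- peel n = k from the LHS sum
    rw [Finset.sum_range_succ]
    simp only [Nat.sub_self, pow_zero, Nat.choose_zero_right, Nat.cast_one, one_mul, mul_one]
    have hcomb : ∀ p ∈ range (k+1),
        ((k+1).factorial : ℚ) * (coeff p G * ((-α)^(k+1-p) / (k+1-p).factorial))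
          + α * ((k.factorial : ℚ) * (coeff p G * ((-α)^(k-p) / (k-p).factorial)))
        = coeff p G * ((-α)^(k+1-p) * p * (k.factorial : ℚ) / (k+1-p).factorial) := by
      intro p hp
      rw [mem_range] at hp
      obtain ⟨d, rfl⟩ : ∃ d, k = p + d := ⟨k - p, by omega⟩
      rw [show p + d + 1 - p = d + 1 from by omega, show p + d - p = d from by omega]
      have h1 : ((d+1).factorial : ℚ) = (d+1) * d.factorial := by
        rw [Nat.factorial_succ]; push_cast; ring
      have h2 : ((p+d+1).factorial : ℚ) = (p+d+1) * (p+d).factorial := by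
        rw [Nat.factorial_succ]; push_cast; ring
      have hd : (d.factorial : ℚ) ≠ 0 := by positivity
      rw [h1, h2, pow_succ]
      field_simp
      ring
    rw [Finset.sum_congr rfl hcomb]
    -- peel p = 0 from the RHS sum, reindex
    rw [Finset.sum_range_succ']
    simp only [Nat.cast_zero, mul_zero, zero_mul, zero_div, mul_zero, add_zero]
    have hmatch : ∀ n ∈ range k,
        ((n+1).factorial : ℚ) * coeff (n+1) G * ((k.choose (k-n) : ℚ) * (-α)^(k-n))
        = coeff (n+1) G * ((-α)^(k+1-(n+1)) * ((n:ℚ)+1) * (k.factorial : ℚ) / (k+1-(n+1)).factorial) := by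
      intro n hn
      rw [mem_range] at hn
      rw [show k+1-(n+1) = k-n from by omega]
      have hc := Nat.choose_mul_factorial_mul_factorial (show k-n ≤ k by omega)
      rw [show k-(k-n) = n from by omega] at hc
      have hc' : ((k.choose (k-n) : ℚ)) * ((k-n).factorial : ℚ) * (n.factorial : ℚ) = (k.factorial : ℚ) := by
        exact_mod_cast congrArg (Nat.cast : ℕ → ℚ) hc
      have h1 : ((n+1).factorial : ℚ) = (n+1) * n.factorial := by
        rw [Nat.factorial_succ]; push_cast; ring
      have hd : ((k-n).factorial : ℚ) ≠ 0 := by positivity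
      rw [h1]
      field_simp
      linear_combination coeff (n+1) G * α^(k-n) * (-1)^(k-n) * hc'
    rw [Finset.sum_congr rfl hmatch]
    push_cast
    ring


lemma derivative_Ra (α : ℚ) : d⁄dX ℚ (Ra α) = PowerSeries.C (R := ℚ) (-α) * Ra α := by
  ext n
  rw [coeff_derivative, coeff_C_mul, coeff_rescale, coeff_rescale, coeff_exp, coeff_exp]
  have h1 : ((n+1).factorial : ℚ) = (n+1) * n.factorial := by
    rw [Nat.factorial_succ]; push_cast; ring
  have hd : (n.factorial : ℚ) ≠ 0 := by positivity
  simp only [Algebra.algebraMap_self, RingHom.id_apply] at *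
  rw [pow_succ, h1]
  field_simp

lemma EE : exp ℚ * exp ℚ = rescale (2:ℚ) (exp ℚ) := by
  have := exp_mul_exp_eq_exp_add (1:ℚ) 1
  rw [rescale_one] at this
  simpa [one_add_one_eq_two] using this

lemma EERa2 : exp ℚ * exp ℚ * Ra 2 = 1 := by
  rw [EE, Ra, exp_mul_exp_eq_exp_add (2:ℚ) (-2)]
  norm_num [rescale_zero]

lemma ERa2 : exp ℚ * Ra 2 = Ra 1 := by
  have := exp_mul_exp_eq_exp_add (1:ℚ) (-2)
  rw [rescale_one] at this
  rw [RingHom.id_apply] at this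
  rw [Ra, this]
  norm_num

lemma hkey : d⁄dX ℚ (G * Ra 2) = G - PowerSeries.C (R := ℚ) 2 * (G * Ra 2) - G * Ra 1 := by
  rw [Derivation.leibniz, smul_eq_mul, smul_eq_mul, derivative_Ra, hODE]
  have h2 : (PowerSeries.C (R := ℚ)) (-2 : ℚ) = - PowerSeries.C (R := ℚ) 2 := by
    rw [map_neg]
  calc G * (PowerSeries.C (R := ℚ) (-2) * Ra 2) + Ra 2 * (G * (exp ℚ * exp ℚ - exp ℚ))
      = G * (exp ℚ * exp ℚ * Ra 2) - G * (exp ℚ * Ra 2) - PowerSeries.C (R := ℚ) 2 * (G * Ra 2) := by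
        rw [h2]; ring
    _ = G - PowerSeries.C (R := ℚ) 2 * (G * Ra 2) - G * Ra 1 := by rw [EERa2, ERa2]; ring

lemma assembly :
    (1 + PowerSeries.C (R := ℚ) 2 * X) * Bor (G * Ra 2) + X * Bor (G * Ra 1) - X * Bor G = 1 := by
  ext k
  cases k with
  | zero =>
    simp only [coeff_zero_eq_constantCoeff, map_sub, map_add, map_mul, map_one,
      constantCoeff_X, mul_zero, zero_mul, add_zero, sub_zero, constantCoeff_C]
    have : constantCoeff (Bor (G * Ra 2)) = coeff 0 (G * Ra 2) := by
      rw [← coeff_zero_eq_constantCoeff_apply, coeff_mk]; simp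
    rw [this, coeff_mul]
    simp [coeff_G_zero, coeff_zero_eq_constantCoeff]
  | succ k =>
    have hco := congrArg (coeff k) hkey
    rw [coeff_derivative, map_sub, map_sub, coeff_C_mul] at hco
    have hfs : ((k+1).factorial : ℚ) = (k+1) * k.factorial := by
      rw [Nat.factorial_succ]; push_cast; ring
    have eB : ∀ (h : ℚ⟦X⟧) (m : ℕ), coeff m (Bor h) = (m.factorial : ℚ) * coeff m h :=
      fun h m => coeff_mk _ _
    have e1 : ∀ h : ℚ⟦X⟧, coeff (k+1) (X * Bor h) = (k.factorial : ℚ) * coeff k h := by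
      intro h
      rw [show (X * Bor h) = Bor h * X from by ring, coeff_succ_mul_X, coeff_mk]
    rw [map_sub, map_add, add_mul, one_mul, map_add, e1, e1,
      show (PowerSeries.C (R := ℚ) 2 * X * Bor (G * Ra 2)) = PowerSeries.C (R := ℚ) 2 * (X * Bor (G * Ra 2)) from by ring,
      coeff_C_mul, e1, eB, hfs]
    rw [coeff_one, if_neg (Nat.succ_ne_zero k)]
    linear_combination (k.factorial : ℚ) * hco

end BipAux

open PowerSeries in
/-- Let `ĝ = exp((eᵗ−1)²/2) = Σ cₙ tⁿ` and let `f = Σ n!·cₙ tⁿ` be its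
inverse Borel transform. Then `f(t/(1+2t)) + (t/(1+t))·f(t/(1+t)) − t·f(t) = 1` in `ℚ[[t]]`. -/
theorem bipartite_graphs_ogf_tau_equation :
    substPS (X * (1 + 2 * X)⁻¹)
        (mk fun n => (n.factorial : ℚ) *
          coeff n (substPS (PowerSeries.C (R := ℚ) (1 / 2) * (exp ℚ - 1) ^ 2) (exp ℚ)))
      + (X * (1 + X)⁻¹) *
        substPS (X * (1 + X)⁻¹)
          (mk fun n => (n.factorial : ℚ) *
            coeff n (substPS (PowerSeries.C (R := ℚ) (1 / 2) * (exp ℚ - 1) ^ 2) (exp ℚ)))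
      - X * (mk fun n => (n.factorial : ℚ) *
          coeff n (substPS (PowerSeries.C (R := ℚ) (1 / 2) * (exp ℚ - 1) ^ 2) (exp ℚ)))
      = 1 := by
  show substPS (X * (1 + 2 * X)⁻¹) (BipAux.Bor BipAux.G)
      + (X * (1 + X)⁻¹) * substPS (X * (1 + X)⁻¹) (BipAux.Bor BipAux.G)
      - X * BipAux.Bor BipAux.G = 1
  rw [show (2 : ℚ⟦X⟧) = PowerSeries.C (R := ℚ) 2 from (map_ofNat (PowerSeries.C (R := ℚ)) 2).symm]
  rw [show (1 + X : ℚ⟦X⟧) = 1 + PowerSeries.C (R := ℚ) 1 * X from by simp]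
  rw [BipAux.tau_formula 2, BipAux.tau_formula 1]
  have hmid : (X * (1 + PowerSeries.C (R := ℚ) 1 * X)⁻¹) *
      (BipAux.Bor (BipAux.G * BipAux.Ra 1)
        + PowerSeries.C (R := ℚ) 1 * X * BipAux.Bor (BipAux.G * BipAux.Ra 1))
      = X * BipAux.Bor (BipAux.G * BipAux.Ra 1) := by
    have hc : (1 + PowerSeries.C (R := ℚ) 1 * X : ℚ⟦X⟧) * (1 + PowerSeries.C (R := ℚ) 1 * X)⁻¹ = 1 :=
      PowerSeries.mul_inv_cancel _ (by simp)
    calc (X * (1 + PowerSeries.C (R := ℚ) 1 * X)⁻¹) *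
        (BipAux.Bor (BipAux.G * BipAux.Ra 1)
          + PowerSeries.C (R := ℚ) 1 * X * BipAux.Bor (BipAux.G * BipAux.Ra 1))
        = X * BipAux.Bor (BipAux.G * BipAux.Ra 1) *
            ((1 + PowerSeries.C (R := ℚ) 1 * X) * (1 + PowerSeries.C (R := ℚ) 1 * X)⁻¹) := by ring
      _ = X * BipAux.Bor (BipAux.G * BipAux.Ra 1) := by rw [hc, mul_one]
  rw [hmid]
  calc BipAux.Bor (BipAux.G * BipAux.Ra 2)
        + PowerSeries.C (R := ℚ) 2 * X * BipAux.Bor (BipAux.G * BipAux.Ra 2)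
        + X * BipAux.Bor (BipAux.G * BipAux.Ra 1) - X * BipAux.Bor BipAux.G
      = (1 + PowerSeries.C (R := ℚ) 2 * X) * BipAux.Bor (BipAux.G * BipAux.Ra 2)
        + X * BipAux.Bor (BipAux.G * BipAux.Ra 1) - X * BipAux.Bor BipAux.G := by ring
    _ = 1 := BipAux.assembly

end
end
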